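/- Let S = {z ∈ ℂ : 0 < Im(z) < π} be the horizontal strip, let L ∈ ℝ, and let S_L = {z ∈ S : Re(z) < L}. Suppose u : closure(S_L) → ℝ is continuous, bounded, harmonic on S_L, satisfies u ≥ 0 on S_L, and u ≥ 1 on the vertical segment {z : Re(z) = L, 0 ≤ Im(z) ≤ π}. Then u(z) ≥ e^{Re(z) − L} · sin(Im(z)) for all z ∈ S_L. -/

import Mathlib

open Complex Set Filter Topology

section AuxStmt8

section aux
variable (L ε : ℝ)

noncomputable def cfun : ℂ → ℝ :=
  fun w => Real.exp (w.re - L) * Real.sin w.im + ε * (w.re * w.re)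

lemma hre' (z : ℂ) : HasFDerivAt (fun w : ℂ => w.re) Complex.reCLM z :=
  Complex.reCLM.hasFDerivAt

lemma him' (z : ℂ) : HasFDerivAt (fun w : ℂ => w.im) Complex.imCLM z :=
  Complex.imCLM.hasFDerivAt

lemma hA' (z : ℂ) : HasFDerivAt (fun w : ℂ => Real.exp (w.re - L))
    (Real.exp (z.re - L) • Complex.reCLM) z :=
  ((hre' z).sub_const L).exp

lemma hAB' (z : ℂ) : HasFDerivAt (fun w : ℂ => Real.exp (w.re - L) * Real.sin w.im)
    (Real.exp (z.re - L) • (Real.cos z.im • Complex.imCLM)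
      + Real.sin z.im • (Real.exp (z.re - L) • Complex.reCLM)) z :=
  (hA' L z).mul ((him' z).sin)

lemma hC' (z : ℂ) : HasFDerivAt (cfun L ε)
    ((Real.exp (z.re - L) • (Real.cos z.im • Complex.imCLM)
      + Real.sin z.im • (Real.exp (z.re - L) • Complex.reCLM))
      + ε • (z.re • Complex.reCLM + z.re • Complex.reCLM)) z :=
  (hAB' L z).add (((hre' z).mul (hre' z)).const_mul ε)

lemma cfun_d1 : (fun w => fderiv ℝ (cfun L ε) w 1)
    = fun w => Real.exp (w.re - L) * Real.sin w.im + ε * (2 * w.re) := by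
  funext w
  rw [(hC' L ε w).fderiv]
  simp; ring

lemma cfun_dI : (fun w => fderiv ℝ (cfun L ε) w Complex.I)
    = fun w => Real.exp (w.re - L) * Real.cos w.im := by
  funext w
  rw [(hC' L ε w).fderiv]
  simp

lemma lap_cfun (z : ℂ) :
    fderiv ℝ (fun w => fderiv ℝ (cfun L ε) w 1) z 1
      + fderiv ℝ (fun w => fderiv ℝ (cfun L ε) w Complex.I) z Complex.I = 2 * ε := by
  rw [cfun_d1, cfun_dI]
  have h1 : HasFDerivAt (fun w : ℂ => Real.exp (w.re - L) * Real.sin w.im + ε * (2 * w.re))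
      ((Real.exp (z.re - L) • (Real.cos z.im • Complex.imCLM)
        + Real.sin z.im • (Real.exp (z.re - L) • Complex.reCLM))
        + ε • ((2:ℝ) • Complex.reCLM)) z :=
    (hAB' L z).add (((hre' z).const_mul (2:ℝ)).const_mul ε)
  have h2 : HasFDerivAt (fun w : ℂ => Real.exp (w.re - L) * Real.cos w.im)
      (Real.exp (z.re - L) • (-Real.sin z.im • Complex.imCLM)
        + Real.cos z.im • (Real.exp (z.re - L) • Complex.reCLM)) z :=
    (hA' L z).mul ((him' z).cos)
  rw [h1.fderiv, h2.fderiv]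
  simp; ring

lemma cfun_contDiff : ContDiff ℝ 2 (cfun L ε) := by
  have hre : ContDiff ℝ 2 (fun w : ℂ => w.re) := Complex.reCLM.contDiff
  have him : ContDiff ℝ 2 (fun w : ℂ => w.im) := Complex.imCLM.contDiff
  exact ((Real.contDiff_exp.comp (hre.sub contDiff_const)).mul
    (Real.contDiff_sin.comp him)).add (contDiff_const.mul (hre.mul hre))

end aux

lemma eval_diffAt {f : ℂ → ℝ} {U : Set ℂ} (hU : IsOpen U) (hf : ContDiffOn ℝ 2 f U)
    {z : ℂ} (hz : z ∈ U) (v : ℂ) :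
    DifferentiableAt ℝ (fun w => fderiv ℝ f w v) z := by
  have hG : ContDiffOn ℝ 1 (fun y => fderiv ℝ f y) U :=
    hf.fderiv_of_isOpen hU (by norm_num)
  have hGd : DifferentiableAt ℝ (fun y => fderiv ℝ f y) z :=
    (hG.differentiableOn one_ne_zero z hz).differentiableAt (hU.mem_nhds hz)
  exact hGd.clm_apply (differentiableAt_const v)

lemma secondDeriv_nonneg {f : ℂ → ℝ} {U : Set ℂ} (hU : IsOpen U) (hf : ContDiffOn ℝ 2 f U)
    {z0 : ℂ} (hz0 : z0 ∈ U) (hmin : IsLocalMin f z0) (v : ℂ) :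
    0 ≤ fderiv ℝ (fun w => fderiv ℝ f w v) z0 v := by
  by_contra hD'
  push_neg at hD'
  set m : ℝ → ℂ := fun t => z0 + t • v with hm_def
  have hm : ∀ t : ℝ, HasDerivAt m v t := by
    intro t
    have := ((hasDerivAt_id t).smul_const v).const_add z0
    rw [one_smul] at this; exact this
  have hmc : Continuous m := by
    exact continuous_const.add (continuous_id.smul continuous_const)
  have hm0 : m 0 = z0 := by simp [hm_def]
  set ψ : ℝ → ℝ := fun t => fderiv ℝ f (m t) v with hψ_def
  set φ : ℝ → ℝ := fun t => f (m t) with hφ_def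
  have hT : m ⁻¹' U ∈ 𝓝 (0:ℝ) :=
    (hU.preimage hmc).mem_nhds (by simp [hm0, hz0])
  have hφd : ∀ t ∈ m ⁻¹' U, HasDerivAt φ (ψ t) t := by
    intro t ht
    have hfd : DifferentiableAt ℝ f (m t) :=
      ((hf.differentiableOn two_ne_zero) (m t) ht).differentiableAt (hU.mem_nhds ht)
    exact hfd.hasFDerivAt.comp_hasDerivAt t (hm t)
  have hminφ : IsLocalMin φ 0 := by
    have htend : Tendsto m (𝓝 0) (𝓝 z0) := by rw [← hm0]; exact hmc.tendsto 0
    have := htend.eventually hmin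
    simpa [IsLocalMin, IsMinFilter, hφ_def, hm0] using this
  have hψ0 : ψ 0 = 0 := by
    have h0 : HasDerivAt φ (ψ 0) 0 := hφd 0 (by simp [hm0, hz0])
    rw [← h0.deriv]; exact hminφ.deriv_eq_zero
  have hψd : HasDerivAt ψ (fderiv ℝ (fun w => fderiv ℝ f w v) z0 v) 0 := by
    have hF : DifferentiableAt ℝ (fun w => fderiv ℝ f w v) (m 0) := by
      rw [hm0]; exact eval_diffAt hU hf hz0 v
    have := hF.hasFDerivAt.comp_hasDerivAt 0 (hm 0)
    rw [hm0] at this; exact this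
  have hslope : ∀ᶠ t in 𝓝[>] (0:ℝ), ψ t < 0 := by
    have h1 := hasDerivAt_iff_tendsto_slope.mp hψd
    have h2 : ∀ᶠ t in 𝓝[≠] (0:ℝ), slope ψ 0 t < 0 :=
      h1.eventually (eventually_of_mem (Iio_mem_nhds hD') fun y hy => hy)
    have h3 : ∀ᶠ t in 𝓝[>] (0:ℝ), slope ψ 0 t < 0 :=
      h2.filter_mono (nhdsWithin_mono 0 fun t ht => ne_of_gt ht)
    filter_upwards [h3, self_mem_nhdsWithin] with t ht ht0
    rw [slope_def_field, hψ0, sub_zero, sub_zero] at ht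
    rcases div_neg_iff.mp ht with ⟨_, hb⟩ | ⟨ha, _⟩
    · exact absurd (mem_Ioi.mp ht0) (not_lt.mpr hb.le)
    · exact ha
  have hev : ∀ᶠ t in 𝓝[>] (0:ℝ), ψ t < 0 ∧ t ∈ m ⁻¹' U ∧ φ 0 ≤ φ t := by
    refine hslope.and (Filter.Eventually.filter_mono nhdsWithin_le_nhds ?_)
    exact (eventually_mem_set.mpr hT).and hminφ
  obtain ⟨δ, hδpos, hδ⟩ := (mem_nhdsGT_iff_exists_Ioc_subset).mp hev
  have hδ0 : (0:ℝ) < δ := hδpos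
  have hcont : ContinuousOn φ (Icc 0 δ) := by
    intro t ht
    rcases eq_or_lt_of_le ht.1 with h | h
    · have h0 : ContinuousAt φ t := by
        rw [← h]; exact (hφd 0 (by simp [hm0, hz0])).continuousAt
      exact h0.continuousWithinAt
    · exact ((hφd t (hδ ⟨h, ht.2⟩).2.1).continuousAt).continuousWithinAt
  have hanti : StrictAntiOn φ (Icc 0 δ) := by
    refine strictAntiOn_of_deriv_neg (convex_Icc 0 δ) hcont ?_
    intro x hx
    rw [interior_Icc] at hx
    have hxm := hδ ⟨hx.1, hx.2.le⟩
    rw [(hφd x hxm.2.1).deriv]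
    exact hxm.1
  have h1 : φ δ < φ 0 := hanti (left_mem_Icc.mpr hδ0.le) (right_mem_Icc.mpr hδ0.le) hδ0
  have h2 : φ 0 ≤ φ δ := (hδ ⟨hδ0, le_rfl⟩).2.2
  linarith

lemma lap_sub {f c : ℂ → ℝ} {U : Set ℂ} (hU : IsOpen U) {z : ℂ} (hz : z ∈ U)
    (hf : ContDiffOn ℝ 2 f U) (hc : ContDiff ℝ 2 c) (v : ℂ) :
    fderiv ℝ (fun w => fderiv ℝ (fun x => f x - c x) w v) z v
      = fderiv ℝ (fun w => fderiv ℝ f w v) z v - fderiv ℝ (fun w => fderiv ℝ c w v) z v := by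
  have hdf : DifferentiableOn ℝ f U := hf.differentiableOn two_ne_zero
  have h1 : (fun w => fderiv ℝ (fun x => f x - c x) w v)
      =ᶠ[𝓝 z] fun w => fderiv ℝ f w v - fderiv ℝ c w v := by
    filter_upwards [hU.mem_nhds hz] with w hw
    rw [fderiv_fun_sub ((hdf w hw).differentiableAt (hU.mem_nhds hw))
      ((hc.differentiable two_ne_zero) w)]
    rfl
  rw [h1.fderiv_eq]
  have hFd : DifferentiableAt ℝ (fun w => fderiv ℝ f w v) z := eval_diffAt hU hf hz v
  have hCd : DifferentiableAt ℝ (fun w => fderiv ℝ c w v) z := by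
    have := (hc.fderiv_right (m := 1) (by norm_num)).differentiable one_ne_zero
    exact (this z).clm_apply (differentiableAt_const v)
  rw [fderiv_fun_sub hFd hCd]
  rfl

end AuxStmt8


/-- `u : ℂ → ℝ` is harmonic on the set `U`: twice continuously differentiable with vanishing
Laplacian `∂²u/∂x² + ∂²u/∂y² = 0` on `U`. -/
def HarmonicOnSet (u : ℂ → ℝ) (U : Set ℂ) : Prop :=
  ContDiffOn ℝ 2 u U ∧ ∀ z ∈ U,
    fderiv ℝ (fun w => fderiv ℝ u w 1) z 1 +
      fderiv ℝ (fun w => fderiv ℝ u w Complex.I) z Complex.I = 0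

/-- Let `S = {0 < Im z < π}` be the horizontal strip, `L ∈ ℝ` and
`S_L = {z ∈ S : Re z < L}`.  If `u` is continuous and bounded on the closure of `S_L`,
harmonic and nonnegative on `S_L`, and `u ≥ 1` on the vertical segment
`{Re z = L, 0 ≤ Im z ≤ π}`, then `u(z) ≥ e^{Re z − L} sin(Im z)` for all `z ∈ S_L`. -/
theorem stmt_8 (L : ℝ) (u : ℂ → ℝ)
    (hcont : ContinuousOn u (closure {z : ℂ | 0 < z.im ∧ z.im < Real.pi ∧ z.re < L}))
    (hbdd : ∃ M : ℝ, ∀ z ∈ closure {z : ℂ | 0 < z.im ∧ z.im < Real.pi ∧ z.re < L}, |u z| ≤ M)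
    (hharm : HarmonicOnSet u {z : ℂ | 0 < z.im ∧ z.im < Real.pi ∧ z.re < L})
    (hnn : ∀ z ∈ {z : ℂ | 0 < z.im ∧ z.im < Real.pi ∧ z.re < L}, 0 ≤ u z)
    (hbc : ∀ z : ℂ, z.re = L → 0 ≤ z.im → z.im ≤ Real.pi → 1 ≤ u z) :
    ∀ z ∈ {z : ℂ | 0 < z.im ∧ z.im < Real.pi ∧ z.re < L},
      Real.exp (z.re - L) * Real.sin z.im ≤ u z := by
  have hSeq : {z : ℂ | 0 < z.im ∧ z.im < Real.pi ∧ z.re < L} = Iio L ×ℂ Ioo 0 Real.pi := by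
    ext w
    simp only [Set.mem_setOf_eq, Complex.mem_reProdIm, mem_Iio, mem_Ioo]
    tauto
  set S := {z : ℂ | 0 < z.im ∧ z.im < Real.pi ∧ z.re < L} with hS_def
  have hSopen : IsOpen S := by
    rw [hSeq]; exact isOpen_Iio.reProdIm isOpen_Ioo
  -- nonnegativity on the closure
  have unn : ∀ w ∈ closure S, 0 ≤ u w := by
    intro w hw
    have h1 : ContinuousWithinAt u S w := ((hcont w hw).mono subset_closure)
    have hne : (𝓝[S] w).NeBot := mem_closure_iff_nhdsWithin_neBot.mp hw
    refine ge_of_tendsto h1 ?_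
    filter_upwards [self_mem_nhdsWithin] with x hx
    exact hnn x hx
  intro z hz
  obtain ⟨hz1, hz2, hz3⟩ := hz
  -- main quantitative step
  have key : ∀ a : ℝ, a < z.re →
      Real.exp (z.re - L) * Real.sin z.im - Real.exp (a - L) ≤ u z := by
    intro a ha
    have haL : a < L := ha.trans hz3
    set K := Icc a L ×ℂ Icc 0 Real.pi with hK_def
    set R := Ioo a L ×ℂ Ioo 0 Real.pi with hR_def
    have hRopen : IsOpen R := isOpen_Ioo.reProdIm isOpen_Ioo
    have hRS : R ⊆ S := by
      rw [hSeq]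
      intro w hw
      rw [Complex.mem_reProdIm] at hw ⊢
      exact ⟨hw.1.2, hw.2⟩
    have hRK : R ⊆ K := by
      intro w hw
      rw [Complex.mem_reProdIm] at hw ⊢
      exact ⟨⟨hw.1.1.le, hw.1.2.le⟩, ⟨hw.2.1.le, hw.2.2.le⟩⟩
    have hclS : closure S = Iic L ×ℂ Icc 0 Real.pi := by
      rw [hSeq, Complex.closure_reProdIm, closure_Iio, closure_Ioo Real.pi_pos.ne]
    have hKS : K ⊆ closure S := by
      rw [hclS]
      intro w hw
      rw [Complex.mem_reProdIm] at hw ⊢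
      exact ⟨hw.1.2, hw.2⟩
    have hKcomp : IsCompact K := by
      have hclosed : IsClosed K := isClosed_Icc.reProdIm isClosed_Icc
      have hbd : K ⊆ Metric.closedBall 0 (|a| + |L| + Real.pi) := by
        intro w hw
        rw [Complex.mem_reProdIm] at hw
        rw [Metric.mem_closedBall, dist_zero_right]
        calc ‖w‖ ≤ |w.re| + |w.im| := Complex.norm_le_abs_re_add_abs_im w
          _ ≤ (|a| + |L|) + Real.pi := by
              have h1 : |w.re| ≤ |a| + |L| := by
                rw [abs_le]
                constructor
                · have := hw.1.1; have := neg_abs_le a; linarith [abs_nonneg L]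
                · have := hw.1.2; have := le_abs_self L; linarith [abs_nonneg a]
              have h2 : |w.im| ≤ Real.pi := by
                rw [abs_le]
                exact ⟨by linarith [hw.2.1, Real.pi_pos], hw.2.2⟩
              linarith
      exact (isCompact_closedBall 0 _).of_isClosed_subset hclosed hbd
    have hzK : z ∈ K := by
      rw [hK_def, Complex.mem_reProdIm]
      exact ⟨⟨ha.le, hz3.le⟩, ⟨hz1.le, hz2.le⟩⟩
    have step : ∀ ε : ℝ, 0 < ε →
        Real.exp (z.re - L) * Real.sin z.im - Real.exp (a - L)
          - ε * (a ^ 2 + L ^ 2 + 1) ≤ u z := by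
      intro ε hε
      have hgC : ContinuousOn (fun x => u x - cfun L ε x) K :=
        (hcont.mono hKS).sub ((cfun_contDiff L ε).continuous.continuousOn)
      obtain ⟨x0, hx0K, hx0min⟩ := hKcomp.exists_isMinOn ⟨z, hzK⟩ hgC
      -- the minimum is not attained in the open rectangle
      have hx0nR : x0 ∉ R := by
        intro hx0R
        have hloc : IsLocalMin (fun x => u x - cfun L ε x) x0 :=
          hx0min.isLocalMin (Filter.mem_of_superset (hRopen.mem_nhds hx0R) hRK)
        have hx0S : x0 ∈ S := hRS hx0R
        have hgc2 : ContDiffOn ℝ 2 (fun x => u x - cfun L ε x) S :=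
          hharm.1.sub ((cfun_contDiff L ε).contDiffOn)
        have h1 := secondDeriv_nonneg hSopen hgc2 hx0S hloc 1
        have h2 := secondDeriv_nonneg hSopen hgc2 hx0S hloc Complex.I
        rw [lap_sub hSopen hx0S hharm.1 (cfun_contDiff L ε) 1] at h1
        rw [lap_sub hSopen hx0S hharm.1 (cfun_contDiff L ε) Complex.I] at h2
        have hu0 := hharm.2 x0 hx0S
        have hcε := lap_cfun L ε x0
        nlinarith [h1, h2, hu0, hcε, hε]
      -- boundary estimate at the minimum point
      have hx0K' := hx0K
      rw [hK_def, Complex.mem_reProdIm] at hx0K'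
      obtain ⟨⟨hre1, hre2⟩, him1, him2⟩ := hx0K'
      have hexp_pos : (0:ℝ) < Real.exp (a - L) := Real.exp_pos _
      have hbound : -Real.exp (a - L) ≤ u x0 - Real.exp (x0.re - L) * Real.sin x0.im := by
        have hx0cl : x0 ∈ closure S := hKS hx0K
        have hu0 : 0 ≤ u x0 := unn x0 hx0cl
        have hsin1 : Real.sin x0.im ≤ 1 := Real.sin_le_one _
        rcases eq_or_lt_of_le hre1 with hra | hra
        · -- Re x0 = a
          have hexp : Real.exp (x0.re - L) = Real.exp (a - L) := by rw [← hra]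
          nlinarith [Real.exp_pos (x0.re - L)]
        rcases eq_or_lt_of_le hre2 with hrL | hrL
        · -- Re x0 = L
          have hub : 1 ≤ u x0 := hbc x0 hrL him1 him2
          have hexp : Real.exp (x0.re - L) = 1 := by rw [hrL]; simp
          nlinarith
        rcases eq_or_lt_of_le him1 with hi0 | hi0
        · -- Im x0 = 0
          have : Real.sin x0.im = 0 := by rw [← hi0]; simp
          nlinarith [Real.exp_pos (x0.re - L)]
        rcases eq_or_lt_of_le him2 with hiπ | hiπ
        · -- Im x0 = π
          have : Real.sin x0.im = 0 := by rw [hiπ]; exact Real.sin_pi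
          nlinarith [Real.exp_pos (x0.re - L)]
        · exact absurd (show x0 ∈ R by
            rw [hR_def, Complex.mem_reProdIm]
            exact ⟨⟨hra, hrL⟩, hi0, hiπ⟩) hx0nR
      -- transfer the bound to z via the minimum
      have hmin_z : u x0 - cfun L ε x0 ≤ u z - cfun L ε z := hx0min hzK
      have hre_sq : x0.re * x0.re ≤ a ^ 2 + L ^ 2 := by
        nlinarith [mul_nonneg (sub_nonneg.mpr hre1) (sub_nonneg.mpr hre2), sq_nonneg a, sq_nonneg L]
      have hzre_sq : 0 ≤ z.re * z.re := mul_self_nonneg _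
      simp only [cfun] at hmin_z
      nlinarith [hmin_z, hbound, hre_sq, hzre_sq, hε]
    -- let ε → 0
    by_contra hlt
    push_neg at hlt
    set d := Real.exp (z.re - L) * Real.sin z.im - Real.exp (a - L) - u z with hd_def
    have hd : 0 < d := by rw [hd_def]; linarith
    have hden : (0:ℝ) < a ^ 2 + L ^ 2 + 1 := by positivity
    have := step (d / (2 * (a ^ 2 + L ^ 2 + 1))) (by positivity)
    have hmul : d / (2 * (a ^ 2 + L ^ 2 + 1)) * (a ^ 2 + L ^ 2 + 1) = d / 2 := by
      field_simp
    rw [hmul] at this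
    linarith
  -- let a → -∞
  by_contra hlt
  push_neg at hlt
  set d := Real.exp (z.re - L) * Real.sin z.im - u z with hd_def
  have hd : 0 < d := by rw [hd_def]; linarith
  set a := min (z.re - 1) (L + Real.log (d / 2)) with ha_def
  have haz : a < z.re := lt_of_le_of_lt (min_le_left _ _) (by linarith)
  have hexp_le : Real.exp (a - L) ≤ d / 2 := by
    have h1 : a - L ≤ Real.log (d / 2) := by
      have := min_le_right (z.re - 1) (L + Real.log (d / 2))
      rw [ha_def]; linarith
    calc Real.exp (a - L) ≤ Real.exp (Real.log (d / 2)) := Real.exp_le_exp.mpr h1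
      _ = d / 2 := Real.exp_log (by linarith)
  have := key a haz
  linarith
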